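/- Let (π,V) be an analytic family of admissible (𝔤,K)-modules over a connected analytic manifold Z, and assume (π_{z₀},V) is finitely generated for some z₀ ∈ Z. Then for every T ∈ Z(𝔤) there exist an integer n and analytic functions a₀,…,a_{n−1} on Z such that π_z(T)^n + Σ_{j<n} a_j(z) π_z(T)^j = 0 on V for all z ∈ Z. -/

import Mathlib

open Polynomial

lemma stmt16_mv_analytic {E : Type*} [NormedAddCommGroup E] [NormedSpace ℝ E]
    {ι : Type*} {U : Set E} (f : ι → E → ℂ) (hf : ∀ i, AnalyticOnNhd ℝ (f i) U)
    (q : MvPolynomial ι ℂ) :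
    AnalyticOnNhd ℝ (fun z => MvPolynomial.eval (fun i => f i z) q) U := by
  induction q using MvPolynomial.induction_on with
  | C a => simpa using (analyticOnNhd_const : AnalyticOnNhd ℝ (fun _ : E => a) U)
  | add p q hp hq => simpa [Pi.add_def] using hp.add hq
  | mul_X p i hp => simpa using hp.mul (hf i)

lemma stmt16_stab {V : Type*} [AddCommGroup V] [Module ℂ V]
    {ι : Sort*} (s : ι → Submodule ℂ V) (t : Submodule ℂ V) (g : Module.End ℂ V)
    (h : ∀ i, ∀ v ∈ s i, g v ∈ t) : ∀ v ∈ ⨆ i, s i, g v ∈ t := by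
  intro v hv
  refine Submodule.iSup_induction s (motive := fun x => g x ∈ t) hv h (by simp) ?_
  intro x y hx hy
  rw [map_add]; exact t.add_mem hx hy

set_option maxHeartbeats 2000000 in
/-- van der Noort: Let `(μ, V)` be an analytic family of admissible
`(𝔤,K)`-modules over a connected analytic manifold (here: a connected open set `U` of a
real normed space `E`).  Admissibility is encoded by the decomposition of `V` into
finite dimensional isotypic components `Viso γ`, each stable under the action of the
center of the algebra `A` (standing for `U(𝔤)`).  Analyticity of `z ↦ μ z y v` is in
the sense of the paper: locally, values lie in a fixed finite dimensional subspace and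
the coordinates are analytic.  If `(μ_{z₀}, V)` is finitely generated for some
`z₀ ∈ U`, then for every central `T ∈ A` there exist `n` and analytic functions
`a₀, …, a_{n-1}` on `U` with `μ_z(T)ⁿ + Σ_{j<n} a_j(z)·μ_z(T)ʲ = 0` for all `z ∈ U`. -/
theorem stmt16
    {E : Type*} [NormedAddCommGroup E] [NormedSpace ℝ E]
    {V : Type*} [AddCommGroup V] [Module ℂ V]
    {A : Type*} [Ring A] [Algebra ℂ A]
    (U : Set E) (hUo : IsOpen U) (hUconn : IsPreconnected U)
    (Γ : Type*) (Viso : Γ → Submodule ℂ V)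
    (hfin : ∀ γ, FiniteDimensional ℂ (Viso γ))
    (hindep : iSupIndep Viso)
    (hspan : ⨆ γ, Viso γ = ⊤)
    (μ : E → A →ₐ[ℂ] Module.End ℂ V)
    (hanal : ∀ (y : A) (v : V), ∀ z₀ ∈ U, ∃ U' : Set E, IsOpen U' ∧ z₀ ∈ U' ∧
      ∃ (r : ℕ) (w : Fin r → V) (c : Fin r → E → ℂ),
        (∀ i, AnalyticOnNhd ℝ (c i) U') ∧ ∀ z ∈ U' ∩ U, μ z y v = ∑ i, c i z • w i)
    (hcentral : ∀ z ∈ U, ∀ y ∈ Set.center A, ∀ γ, ∀ v ∈ Viso γ, μ z y v ∈ Viso γ)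
    (z₀ : E) (hz₀ : z₀ ∈ U)
    (hfg : ∃ F : Finset Γ,
      Submodule.span ℂ {x : V | ∃ y : A, ∃ v ∈ ⨆ γ ∈ F, Viso γ, x = μ z₀ y v} = ⊤)
    (T : A) (hT : T ∈ Set.center A) :
    ∃ (nn : ℕ) (aco : Fin nn → E → ℂ),
      (∀ j, AnalyticOnNhd ℝ (aco j) U) ∧
      ∀ z ∈ U, (μ z T) ^ nn + ∑ j : Fin nn, aco j z • (μ z T) ^ (j : ℕ) = 0 := by
  classical
  obtain ⟨F, hF⟩ := hfg
  set L : Submodule ℂ V := ⨆ γ ∈ F, Viso γ with hLdef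
  have hLfin : FiniteDimensional ℂ L := by
    have h := Submodule.finiteDimensional_finset_sup F Viso
    rwa [Finset.sup_eq_iSup] at h
  -- analyticity of linear functionals of matrix coefficients
  have ana : ∀ (ℓ : V →ₗ[ℂ] ℂ) (y : A) (v : V),
      AnalyticOnNhd ℝ (fun z => ℓ (μ z y v)) U := by
    intro ℓ y v z₁ hz₁
    obtain ⟨U', hU'o, hz₁', r, w, c, hc, heq⟩ := hanal y v z₁ hz₁
    have h2 : AnalyticAt ℝ (fun z => ∑ i, c i z * ℓ (w i)) z₁ :=
      Finset.analyticOnNhd_fun_sum Finset.univ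
        (fun i _ => (hc i).mul analyticOnNhd_const) z₁ hz₁'
    refine h2.congr ?_
    filter_upwards [(hU'o.inter hUo).mem_nhds ⟨hz₁', hz₁⟩] with z hz
    rw [heq z hz]
    simp [map_sum, map_smul, smul_eq_mul]
  -- stability of L under μ z T
  have hLstab : ∀ z ∈ U, ∀ v ∈ L, μ z T v ∈ L := by
    intro z hz v hv
    rw [hLdef, iSup_subtype'] at hv
    refine stmt16_stab _ L (μ z T) ?_ v hv
    rintro ⟨γ, hγ⟩ x hx
    exact le_iSup₂ (f := fun γ _ => Viso γ) γ hγ (hcentral z hz T hT γ x hx)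
  set n : ℕ := Module.finrank ℂ L with hn
  let bL : Module.Basis (Fin n) ℂ L := Module.finBasis ℂ L
  obtain ⟨L', hL'⟩ := Submodule.exists_isCompl L
  set P : V →ₗ[ℂ] L := Submodule.projectionOnto L L' hL' with hP
  set f : E → Module.End ℂ L := fun z => P ∘ₗ (μ z T) ∘ₗ L.subtype with hfdef
  have hf_apply : ∀ z ∈ U, ∀ v : L, ((f z v : L) : V) = μ z T v := by
    intro z hz v
    have hm : μ z T (v : V) ∈ L := hLstab z hz _ v.2
    have : f z v = P (μ z T (v : V)) := rfl
    rw [this, show μ z T (v : V) = ((⟨μ z T (v : V), hm⟩ : L) : V) from rfl,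
      hP, Submodule.projectionOnto_apply_left hL']
  have hf_pow : ∀ z ∈ U, ∀ (k : ℕ) (v : L), (((f z ^ k) v : L) : V) = ((μ z T) ^ k) (v : V) := by
    intro z hz k
    induction k with
    | zero => intro v; simp
    | succ k ih =>
      intro v
      rw [pow_succ', pow_succ']
      have : ((f z ^ (k+1)) v) = f z ((f z ^ k) v) := by
        rw [pow_succ']; rfl
      rw [show (f z * f z ^ k) v = f z ((f z ^ k) v) from rfl, hf_apply z hz, ih]
      rfl
  set M : E → Matrix (Fin n) (Fin n) ℂ := fun z => LinearMap.toMatrix bL bL (f z) with hMdef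
  have hM : ∀ i j, AnalyticOnNhd ℝ (fun z => M z i j) U := by
    intro i j
    have : (fun z => M z i j) = fun z => ((bL.coord i) ∘ₗ P) (μ z T (bL j : V)) := by
      funext z
      simp [hMdef, LinearMap.toMatrix_apply, hfdef, Module.Basis.coord_apply]
    rw [this]
    exact ana _ T _
  -- universal characteristic polynomial
  set Mu : Matrix (Fin n) (Fin n) (MvPolynomial (Fin n × Fin n) ℂ) :=
    Matrix.of (fun i j => MvPolynomial.X (i, j)) with hMu
  set χ : Polynomial (MvPolynomial (Fin n × Fin n) ℂ) := Mu.charpoly with hχ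
  have hmap : ∀ z, M z = Mu.map (MvPolynomial.eval (fun p => M z p.1 p.2)) := by
    intro z; ext i j
    simp [hMu, Matrix.map_apply]
  have hchar : ∀ z, (M z).charpoly = χ.map (MvPolynomial.eval (fun p => M z p.1 p.2)) := by
    intro z
    conv_lhs => rw [hmap z]
    exact Matrix.charpoly_map Mu _
  set aco : Fin n → E → ℂ :=
    fun j z => MvPolynomial.eval (fun p => M z p.1 p.2) (χ.coeff (j : ℕ)) with haco
  have hacoeq : ∀ (z : E) (j : Fin n), (M z).charpoly.coeff (j : ℕ) = aco j z := by
    intro z j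
    rw [hchar z, Polynomial.coeff_map]
  have haco_an : ∀ j, AnalyticOnNhd ℝ (aco j) U := by
    intro j
    have h := stmt16_mv_analytic (E := E) (ι := (Fin n × Fin n))
      (fun p z => M z p.1 p.2) (fun p => hM p.1 p.2) (χ.coeff (j : ℕ))
    exact h
  have hdeg : ∀ z, (M z).charpoly.natDegree = n := by
    intro z
    rw [Matrix.charpoly_natDegree_eq_dim, Fintype.card_fin]
  -- Cayley–Hamilton on L
  have hCH : ∀ z, (f z) ^ n + ∑ j : Fin n, aco j z • (f z) ^ (j : ℕ) = 0 := by
    intro z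
    have h0 : Polynomial.aeval (f z) (M z).charpoly = 0 := by
      let e := LinearMap.toMatrixAlgEquiv bL
      have he : e (f z) = M z := by
        ext i j
        rw [LinearMap.toMatrixAlgEquiv_apply]
        exact (LinearMap.toMatrix_apply bL bL (f z) i j).symm
      apply e.injective
      rw [map_zero]
      calc e (Polynomial.aeval (f z) (M z).charpoly)
          = Polynomial.aeval (e (f z)) (M z).charpoly :=
            (Polynomial.aeval_algHom_apply e.toAlgHom (f z) (M z).charpoly).symm
        _ = 0 := by rw [he]; exact Matrix.aeval_self_charpoly (M z)
    have hmon := Matrix.charpoly_monic (M z)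
    rw [hmon.as_sum, hdeg z] at h0
    simp only [map_add, map_sum, map_mul, map_pow, Polynomial.aeval_X, Polynomial.aeval_C] at h0
    simp_rw [← hacoeq z]
    rw [Fin.sum_univ_eq_sum_range (fun i : ℕ => (M z).charpoly.coeff i • (f z) ^ i) n]
    rw [← h0]
    congr 1
  -- the candidate operator family
  set D : E → Module.End ℂ V :=
    fun z => (μ z T) ^ n + ∑ j : Fin n, aco j z • (μ z T) ^ (j : ℕ) with hD
  refine ⟨n, aco, haco_an, ?_⟩
  suffices hgoal : ∀ z ∈ U, ∀ v : V, D z v = 0 by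
    intro z hz
    exact LinearMap.ext fun v => hgoal z hz v
  have hDapp : ∀ z (v : V),
      D z v = ((μ z T) ^ n) v + ∑ j : Fin n, aco j z • ((μ z T) ^ (j : ℕ)) v := by
    intro z v
    simp [hD, LinearMap.add_apply, LinearMap.sum_apply, LinearMap.smul_apply]
  have hDL : ∀ z ∈ U, ∀ v (hv : v ∈ L), D z v = 0 := by
    intro z hz v hv
    calc D z v = ((μ z T) ^ n) v + ∑ j : Fin n, aco j z • ((μ z T) ^ (j : ℕ)) v := hDapp z v
      _ = ↑((f z ^ n) ⟨v, hv⟩) + ∑ j : Fin n, aco j z • (((f z ^ (j : ℕ)) ⟨v, hv⟩ : L) : V) := by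
          rw [hf_pow z hz]
          exact congrArg _ (Finset.sum_congr rfl fun j _ => by rw [hf_pow z hz])
      _ = (((f z ^ n + ∑ j : Fin n, aco j z • (f z) ^ (j : ℕ)) ⟨v, hv⟩ : L) : V) := by
          simp [LinearMap.add_apply, LinearMap.sum_apply, LinearMap.smul_apply]
      _ = 0 := by rw [hCH z]; simp
  have hTy : ∀ y : A, T * y = y * T := fun y => (Set.mem_center_iff.mp hT).comm y
  have hDcomm : ∀ z (y : A) (w : V), D z (μ z y w) = μ z y (D z w) := by
    intro z y w
    have hc : Commute (μ z y) (μ z T) := by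
      unfold Commute SemiconjBy
      rw [← map_mul, ← map_mul, hTy y]
    have hcD : Commute (μ z y) (D z) := by
      exact Commute.add_right (hc.pow_right n)
        (Commute.sum_right _ _ _ fun j _ => (hc.pow_right (j : ℕ)).smul_right (aco j z))
    have h2 := congrFun (congrArg DFunLike.coe hcD.eq) w
    simpa [Module.End.mul_apply] using h2.symm
  have hpow_stab : ∀ z ∈ U, ∀ γ (k : ℕ), ∀ v ∈ Viso γ, ((μ z T) ^ k) v ∈ Viso γ := by
    intro z hz γ k
    induction k with
    | zero => intro v hv; simpa using hv
    | succ k ih =>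
      intro v hv
      rw [pow_succ, Module.End.mul_apply]
      exact ih _ (hcentral z hz T hT γ v hv)
  have hDstab : ∀ z ∈ U, ∀ γ, ∀ v ∈ Viso γ, D z v ∈ Viso γ := by
    intro z hz γ v hv
    rw [hDapp]
    exact Submodule.add_mem _ (hpow_stab z hz γ n v hv)
      (Submodule.sum_mem _ fun j _ => Submodule.smul_mem _ _ (hpow_stab z hz γ (j : ℕ) v hv))
  suffices hγall : ∀ γ, ∀ v ∈ Viso γ, ∀ z ∈ U, D z v = 0 by
    intro z hz v
    have hv : v ∈ ⨆ γ, Viso γ := by rw [hspan]; trivial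
    have h2 := stmt16_stab Viso ⊥ (D z)
      (fun γ x hx => by rw [hγall γ x hx z hz]; exact Submodule.zero_mem ⊥) v hv
    simpa using h2
  intro γ v hvγ
  -- the projection onto the isotypic component
  set Cγ : Submodule ℂ V := ⨆ (γ') (_ : γ' ≠ γ), Viso γ' with hCγ
  have hcompl : IsCompl (Viso γ) Cγ := by
    constructor
    · exact hindep γ
    · rw [codisjoint_iff, eq_top_iff, ← hspan]
      refine iSup_le fun γ' => ?_
      by_cases hne : γ' = γ
      · subst hne; exact le_sup_of_le_left le_rfl
      · exact le_sup_of_le_right (le_iSup₂ (f := fun γ'' (_ : γ'' ≠ γ) => Viso γ'') γ' hne)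
  set q : V →ₗ[ℂ] Viso γ := Submodule.projectionOnto _ _ hcompl with hqdef
  have hq_left : ∀ (x : V) (hx : x ∈ Viso γ), q x = ⟨x, hx⟩ := fun x hx =>
    Submodule.linearProjOfIsCompl_apply_left hcompl ⟨x, hx⟩
  have hCstab : ∀ z ∈ U, ∀ w ∈ Cγ, D z w ∈ Cγ := by
    intro z hz w hw
    rw [hCγ, iSup_subtype'] at hw
    refine stmt16_stab _ Cγ (D z) ?_ w hw
    rintro ⟨γ', hne⟩ x hx
    exact le_iSup₂ (f := fun γ'' (_ : γ'' ≠ γ) => Viso γ'') γ' hne (hDstab z hz γ' x hx)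
  have hqD : ∀ z ∈ U, ∀ w : V, (q (D z w) : V) = D z (q w) := by
    intro z hz w
    have hmem2 : (w - (q w : V)) ∈ Cγ := by
      rw [← Submodule.linearProjOfIsCompl_ker (p := Viso γ) hcompl]
      rw [LinearMap.mem_ker, map_sub, ← hqdef, hq_left _ (q w).2]
      exact sub_self _
    have hw : w = ((q w : V)) + (w - (q w : V)) := by abel
    conv_lhs => rw [hw]
    rw [map_add, map_add, hq_left _ (hDstab z hz γ _ (q w).2)]
    have h0 : q (D z (w - (q w : V))) = 0 := by
      have := hCstab z hz _ hmem2
      rw [← Submodule.linearProjOfIsCompl_ker (p := Viso γ) hcompl, LinearMap.mem_ker] at this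
      exact this
    rw [h0]
    simp
  -- generation of the isotypic component at z₀
  have hsp : ⊤ ≤ Submodule.span ℂ (q '' {x : V | ∃ y : A, ∃ w ∈ L, x = μ z₀ y w}) := by
    rw [Submodule.span_image, hF, Submodule.map_top, hqdef, Submodule.range_projectionOnto]
  let bγ := Module.Basis.ofSpan hsp
  haveI : FiniteDimensional ℂ (Viso γ) := hfin γ
  haveI := FiniteDimensional.fintypeBasisIndex bγ
  have hmem' : ∀ k, ∃ y : A, ∃ w, w ∈ L ∧ q (μ z₀ y w) = bγ k := by
    intro k
    obtain ⟨x, hxg, hqx⟩ := Module.Basis.ofSpan_subset hsp (Set.mem_range_self k)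
    obtain ⟨y, w, hw, rfl⟩ := hxg
    exact ⟨y, w, hw, hqx⟩
  choose yk wk hwk hqk using hmem'
  set hh : _ → E → Viso γ := fun k z => q (μ z (yk k) (wk k)) with hhdef
  set N : E → Matrix _ _ ℂ := fun z => bγ.toMatrix (fun k => hh k z) with hN
  set δ : E → ℂ := fun z => (N z).det with hδ
  have hN_an : ∀ i j, AnalyticOnNhd ℝ (fun z => N z i j) U := by
    intro i j
    have heq : (fun z => N z i j) = fun z => ((bγ.coord i) ∘ₗ q) (μ z (yk j) (wk j)) := by
      funext z
      simp [hN, Module.Basis.toMatrix_apply, Module.Basis.coord_apply, hhdef]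
    rw [heq]
    exact ana _ _ _
  have hδ_an : AnalyticOnNhd ℝ δ U := by
    have heq : δ = fun z => ∑ σ : Equiv.Perm _, (Equiv.Perm.sign σ : ℂ) * ∏ i, N z (σ i) i := by
      funext z
      rw [hδ]
      exact Matrix.det_apply' (N z)
    rw [heq]
    exact Finset.analyticOnNhd_fun_sum _ fun σ _ =>
      analyticOnNhd_const.mul (Finset.analyticOnNhd_fun_prod _ fun i _ => hN_an (σ i) i)
  have hδz₀ : δ z₀ = 1 := by
    have heq2 : bγ.toMatrix (fun k => hh k z₀) = bγ.toMatrix ⇑bγ := by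
      have h3 : (fun k => hh k z₀) = ⇑bγ := funext fun k => hqk k
      rw [h3]
    show (bγ.toMatrix fun k => hh k z₀).det = 1
    rw [heq2, Module.Basis.toMatrix_self, Matrix.det_one]
  have hev : ∀ᶠ z in nhds z₀, δ z ≠ 0 :=
    ((hδ_an z₀ hz₀).continuousAt).eventually_ne (by rw [hδz₀]; exact one_ne_zero)
  -- where δ ≠ 0, D z kills the whole component
  have hkill : ∀ z ∈ U, δ z ≠ 0 → ∀ u ∈ Viso γ, D z u = 0 := by
    intro z hz hδne u hu
    have hunit : IsUnit (bγ.det fun k => hh k z) := by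
      rw [Module.Basis.det_apply]
      exact isUnit_iff_ne_zero.mpr hδne
    have hspan2 : Submodule.span ℂ (Set.range fun k => hh k z) = ⊤ :=
      ((Module.Basis.is_basis_iff_det bγ).mpr hunit).2
    have hk0 : ∀ k, D z ((hh k z : Viso γ) : V) = 0 := by
      intro k
      have : D z (μ z (yk k) (wk k)) = 0 := by
        rw [hDcomm, hDL z hz (wk k) (hwk k), map_zero]
      calc D z ((hh k z : Viso γ) : V) = (q (D z (μ z (yk k) (wk k))) : V) := (hqD z hz _).symm
        _ = 0 := by rw [this]; simp
    set G : Viso γ →ₗ[ℂ] V := (D z) ∘ₗ (Viso γ).subtype with hG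
    have hrange : Set.range (fun k => hh k z) ⊆ (LinearMap.ker G : Set (Viso γ)) := by
      rintro x ⟨k, rfl⟩
      exact hk0 k
    have hker : ⊤ ≤ LinearMap.ker G := by
      rw [← hspan2]
      exact Submodule.span_le.mpr hrange
    have := hker (Set.mem_univ (⟨u, hu⟩ : Viso γ))
    simpa [hG] using this
  -- coordinates of D z v vanish on U by analytic continuation
  have hφ : ∀ i, ∀ z ∈ U, (bγ.coord i) (q (D z v)) = 0 := by
    intro i
    set ℓ : V →ₗ[ℂ] ℂ := (bγ.coord i) ∘ₗ q with hℓ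
    have hφ_an : AnalyticOnNhd ℝ (fun z => ℓ (D z v)) U := by
      have heq : (fun z => ℓ (D z v)) =
          fun z => ℓ (μ z (T ^ n) v) + ∑ j : Fin n, aco j z * ℓ (μ z (T ^ (j : ℕ)) v) := by
        funext z
        rw [hDapp]
        simp [map_pow, map_add, map_sum, map_smul, smul_eq_mul]
      rw [heq]
      exact (ana ℓ (T ^ n) v).add
        (Finset.analyticOnNhd_fun_sum _ fun j _ => (haco_an j).mul (ana ℓ _ v))
    have hev0 : (fun z => ℓ (D z v)) =ᶠ[nhds z₀] 0 := by
      filter_upwards [hev, hUo.mem_nhds hz₀] with z h1 h2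
      simp [hℓ, hkill z h2 h1 v hvγ]
    have hEq := hφ_an.eqOn_zero_of_preconnected_of_eventuallyEq_zero hUconn hz₀ hev0
    intro z hz
    exact hEq hz
  intro z hz
  have hmemD : D z v ∈ Viso γ := hDstab z hz γ v hvγ
  have hq0 : q (D z v) = 0 := by
    rw [← Module.Basis.forall_coord_eq_zero_iff bγ]
    exact fun i => hφ i z hz
  have h2 := hq_left (D z v) hmemD
  rw [hq0] at h2
  have h3 := congrArg (fun x : Viso γ => (x : V)) h2
  simpa using h3.symm
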